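/- arXiv:1305.1276 — 6 statements merged into one kernel-verified Lean document; each statement's English description precedes it below -/
import Mathlib

section
/- Suppose (h*, Q*) ∈ Λ̃ is a dynamic user equilibrium with elastic demand (E-DUE). Then (h*, Q*) solves the variational inequality VI(Ψ, Θ), i.e. ∑_{p∈P} ∫_{t0}^{tf} Ψ_p(t, h*)(h_p(t) − h*_p(t)) dt − ∑_{ij∈W} Θ_ij[Q*](Q_ij − Q*_ij) ≥ 0 for every (h, Q) ∈ Λ̃. (Necessity part of Theorem 3.1.) -/
open MeasureTheory Set

/-- A path-flow vector: each `h p` is measurable, a.e. nonnegative on `[t0, tf]`,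
and square-integrable on `[t0, tf]`. -/
def IsPathFlow {P : Type*} (t0 tf : ℝ) (h : P → ℝ → ℝ) : Prop :=
  ∀ p, Measurable (h p) ∧
    (∀ᵐ t ∂(volume.restrict (Icc t0 tf)), 0 ≤ h p t) ∧
    MemLp (h p) 2 (volume.restrict (Icc t0 tf))

/-- Membership in the feasible set `Λ̃`. -/
def Feasible {P W : Type*} [Fintype P] [DecidableEq W] (t0 tf : ℝ) (w : P → W)
    (h : P → ℝ → ℝ) (Q : W → ℝ) : Prop :=
  IsPathFlow t0 tf h ∧
    ∀ ij, 0 ≤ Q ij ∧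
      (∑ p ∈ Finset.univ.filter (fun p => w p = ij), ∫ t in Icc t0 tf, h p t) = Q ij

/-- `(h, Q)` is a dynamic user equilibrium with elastic demand. -/
def IsEDUE {P W : Type*} (t0 tf : ℝ) (w : P → W)
    (Ψ : (P → ℝ → ℝ) → P → ℝ → ℝ) (Θ : (W → ℝ) → W → ℝ)
    (h : P → ℝ → ℝ) (Q : W → ℝ) : Prop :=
  ∀ p,
    (∀ᵐ t ∂(volume.restrict (Icc t0 tf)), 0 < h p t → Ψ h p t = Θ Q (w p)) ∧
    (∀ᵐ t ∂(volume.restrict (Icc t0 tf)), Θ Q (w p) ≤ Ψ h p t)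

/-- **Necessity part of Theorem 3.1**: an E-DUE solves the variational inequality
`VI(Ψ, Θ)`. -/
theorem edue_solves_vi {P W : Type*} [Fintype P] [Nonempty P] [Fintype W] [DecidableEq W]
    (t0 tf : ℝ) (ht : t0 < tf) (w : P → W)
    (Ψ : (P → ℝ → ℝ) → P → ℝ → ℝ) (Θ : (W → ℝ) → W → ℝ)
    (hΨ : ∀ h : P → ℝ → ℝ, IsPathFlow t0 tf h → ∀ p,
      Measurable (Ψ h p) ∧ (∀ t ∈ Icc t0 tf, 0 < Ψ h p t) ∧
      MemLp (Ψ h p) 2 (volume.restrict (Icc t0 tf)))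
    (hΘ : ∀ Q : W → ℝ, (∀ ij, 0 ≤ Q ij) → ∀ ij, 0 < Θ Q ij)
    (hstar : P → ℝ → ℝ) (Qstar : W → ℝ)
    (hfeas : Feasible t0 tf w hstar Qstar)
    (hedue : IsEDUE t0 tf w Ψ Θ hstar Qstar) :
    ∀ (h : P → ℝ → ℝ) (Q : W → ℝ), Feasible t0 tf w h Q →
      0 ≤ (∑ p, ∫ t in Icc t0 tf, Ψ hstar p t * (h p t - hstar p t))
          - ∑ ij, Θ Qstar ij * (Q ij - Qstar ij) := by

  intro h Q hhQ
  have hfin : IsFiniteMeasure (volume.restrict (Icc t0 tf)) := by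
    constructor
    simp [Measure.restrict_apply_univ]
  obtain ⟨hpfs, hQs⟩ := hfeas
  obtain ⟨hpf, hQf⟩ := hhQ
  have hΨs := hΨ hstar hpfs
  have int_mul : ∀ (g : P → ℝ → ℝ), IsPathFlow t0 tf g → ∀ p,
      Integrable (fun t => Ψ hstar p t * g p t) (volume.restrict (Icc t0 tf)) := by
    intro g hg p
    have h1 : MemLp (Ψ hstar p • g p) 1 (volume.restrict (Icc t0 tf)) :=
      (hg p).2.2.smul (hΨs p).2.2 (hpqr := ⟨by simp [ENNReal.inv_two_add_inv_two]⟩)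
    exact memLp_one_iff_integrable.mp h1
  have int_g : ∀ (g : P → ℝ → ℝ), IsPathFlow t0 tf g → ∀ p,
      Integrable (g p) (volume.restrict (Icc t0 tf)) :=
    fun g hg p => (hg p).2.2.integrable (by norm_num)
  have eq_star : ∀ p, (∫ t in Icc t0 tf, Ψ hstar p t * hstar p t)
      = Θ Qstar (w p) * ∫ t in Icc t0 tf, hstar p t := by
    intro p
    rw [← integral_const_mul]
    refine integral_congr_ae ?_
    filter_upwards [(hedue p).1, (hpfs p).2.1] with t h1 h2
    rcases lt_or_eq_of_le h2 with hpos | hzero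
    · rw [h1 hpos]
    · rw [← hzero, mul_zero, mul_zero]
  have ineq_h : ∀ p, Θ Qstar (w p) * (∫ t in Icc t0 tf, h p t)
      ≤ ∫ t in Icc t0 tf, Ψ hstar p t * h p t := by
    intro p
    rw [← integral_const_mul]
    refine integral_mono_ae ((int_g h hpf p).const_mul _) (int_mul h hpf p) ?_
    filter_upwards [(hedue p).2, (hpf p).2.1] with t h1 h2
    exact mul_le_mul_of_nonneg_right h1 h2
  have per : ∀ p, Θ Qstar (w p) * ((∫ t in Icc t0 tf, h p t) - ∫ t in Icc t0 tf, hstar p t)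
      ≤ ∫ t in Icc t0 tf, Ψ hstar p t * (h p t - hstar p t) := by
    intro p
    have hsplit : (∫ t in Icc t0 tf, Ψ hstar p t * (h p t - hstar p t))
        = (∫ t in Icc t0 tf, Ψ hstar p t * h p t)
          - ∫ t in Icc t0 tf, Ψ hstar p t * hstar p t := by
      rw [← integral_sub (int_mul h hpf p) (int_mul hstar hpfs p)]
      simp [mul_sub]
    rw [hsplit, eq_star p, mul_sub]
    exact sub_le_sub_right (ineq_h p) _
  have group : ∀ (g : P → ℝ → ℝ) (R : W → ℝ),
      (∀ ij, (∑ p ∈ Finset.univ.filter (fun p => w p = ij), ∫ t in Icc t0 tf, g p t) = R ij) →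
      ∑ ij, Θ Qstar ij * R ij = ∑ p, Θ Qstar (w p) * ∫ t in Icc t0 tf, g p t := by
    intro g R hR
    rw [← Finset.sum_fiberwise Finset.univ w
        (fun p => Θ Qstar (w p) * ∫ t in Icc t0 tf, g p t)]
    refine Finset.sum_congr rfl fun ij _ => ?_
    rw [← hR ij, Finset.mul_sum]
    refine Finset.sum_congr rfl fun p hp => ?_
    rw [(Finset.mem_filter.mp hp).2]
  have g1 := group h Q (fun ij => (hQf ij).2)
  have g2 := group hstar Qstar (fun ij => (hQs ij).2)
  have hsum : ∑ ij, Θ Qstar ij * (Q ij - Qstar ij)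
      = ∑ p, Θ Qstar (w p) *
          ((∫ t in Icc t0 tf, h p t) - ∫ t in Icc t0 tf, hstar p t) := by
    simp only [mul_sub, Finset.sum_sub_distrib, g1, g2]
  rw [hsum, sub_nonneg]
  exact Finset.sum_le_sum fun p _ => per p
end

section
/- Suppose (h*, Q*) ∈ Λ̃ solves the variational inequality VI(Ψ, Θ). Then (h*, Q*) is a dynamic user equilibrium with elastic demand (E-DUE). (Sufficiency part of Theorem 3.1.) -/
open MeasureTheory Set

lemma mul_int_aux {μ : Measure ℝ} {f g : ℝ → ℝ} (hf : MemLp f 2 μ) (hg : MemLp g 2 μ) :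
    Integrable (fun t => f t * g t) μ := by
  have h : MemLp (g • f) 1 μ := hf.smul hg (hpqr := ⟨by
    rw [ENNReal.inv_two_add_inv_two, inv_one]⟩)
  have h2 := memLp_one_iff_integrable.mp h
  have : (fun t => f t * g t) = g • f := by funext t; simp [mul_comm]
  rw [this]; exact h2

lemma null_of_setIntegral_nonpos {μ : Measure ℝ} [IsFiniteMeasure μ] {s : Set ℝ}
    (hs : MeasurableSet s) {f : ℝ → ℝ} (hf : Integrable f μ) (hpos : ∀ t ∈ s, 0 < f t)
    (hle : (∫ t in s, f t ∂μ) ≤ 0) : μ s = 0 := by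
  by_contra h0
  have hnn : 0 ≤ᵐ[μ.restrict s] f :=
    (ae_restrict_iff' hs).2 (ae_of_all _ fun t ht => (hpos t ht).le)
  have hsupp : Function.support f ∩ s = s :=
    Set.inter_eq_self_of_subset_right fun t ht => (hpos t ht).ne'
  have hlt := (setIntegral_pos_iff_support_of_nonneg_ae hnn hf.integrableOn).2
    (by rw [hsupp]; exact pos_iff_ne_zero.mpr h0)
  linarith

lemma perturb_ineq {P W : Type*} [Fintype P] [DecidableEq P] [Fintype W] [DecidableEq W]
    (t0 tf : ℝ) (w : P → W) (Ψ0 : P → ℝ → ℝ) (Θ0 : W → ℝ)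
    (hstar : P → ℝ → ℝ) (Qstar : W → ℝ)
    (hfeas : Feasible t0 tf w hstar Qstar)
    (hvi : ∀ (h : P → ℝ → ℝ) (Q : W → ℝ), Feasible t0 tf w h Q →
      0 ≤ (∑ q, ∫ t in Icc t0 tf, Ψ0 q t * (h q t - hstar q t))
          - ∑ ij, Θ0 ij * (Q ij - Qstar ij))
    (p : P) (δ : ℝ → ℝ) (hδm : Measurable δ)
    (hδ2 : MemLp δ 2 (volume.restrict (Icc t0 tf)))
    (hnn : ∀ᵐ t ∂(volume.restrict (Icc t0 tf)), 0 ≤ hstar p t + δ t) :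
    0 ≤ (∫ t in Icc t0 tf, Ψ0 p t * δ t) - Θ0 (w p) * ∫ t in Icc t0 tf, δ t := by
  haveI : IsFiniteMeasure (volume.restrict (Icc t0 tf)) := by
    constructor
    rw [Measure.restrict_apply_univ, Real.volume_Icc]
    exact ENNReal.ofReal_lt_top
  have hδint : Integrable δ (volume.restrict (Icc t0 tf)) := hδ2.integrable one_le_two
  have hstarint : ∀ q, Integrable (hstar q) (volume.restrict (Icc t0 tf)) := fun q =>
    ((hfeas.1 q).2.2).integrable one_le_two
  obtain ⟨h', hp', hq'⟩ : ∃ h' : P → ℝ → ℝ, h' p = (fun t => hstar p t + δ t) ∧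
      ∀ q, q ≠ p → h' q = hstar q := by
    refine ⟨Function.update hstar p (fun t => hstar p t + δ t),
      Function.update_self .., fun q hq => Function.update_of_ne hq ..⟩
  obtain ⟨Q', hQp, hQq⟩ : ∃ Q' : W → ℝ,
      Q' (w p) = Qstar (w p) + ∫ t in Icc t0 tf, δ t ∧
      ∀ ij, ij ≠ w p → Q' ij = Qstar ij := by
    refine ⟨Function.update Qstar (w p) (Qstar (w p) + ∫ t in Icc t0 tf, δ t),
      Function.update_self .., fun ij hij => Function.update_of_ne hij ..⟩
  have hsum : ∀ ij, (∑ q ∈ Finset.univ.filter (fun q => w q = ij),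
      ∫ t in Icc t0 tf, h' q t) = Q' ij := by
    intro ij
    have key : ∀ q, (∫ t in Icc t0 tf, h' q t)
        = (∫ t in Icc t0 tf, hstar q t)
          + (if q = p then ∫ t in Icc t0 tf, δ t else 0) := by
      intro q
      by_cases hq : q = p
      · subst hq
        rw [hp', if_pos rfl, integral_add (hstarint q) hδint]
      · rw [hq' q hq, if_neg hq, add_zero]
    rw [Finset.sum_congr rfl fun q _ => key q, Finset.sum_add_distrib,
      (hfeas.2 ij).2, Finset.sum_ite_eq' _ p]
    by_cases hij : ij = w p
    · subst hij
      simp [hQp]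
    · have : ¬ w p = ij := fun h => hij h.symm
      simp [this, hQq ij hij]
  have hfeas' : Feasible t0 tf w h' Q' := by
    constructor
    · intro q
      by_cases hq : q = p
      · subst hq
        rw [hp']
        exact ⟨((hfeas.1 q).1).add hδm, hnn, ((hfeas.1 q).2.2).add hδ2⟩
      · rw [hq' q hq]; exact hfeas.1 q
    · intro ij
      refine ⟨?_, hsum ij⟩
      rw [← hsum ij]
      refine Finset.sum_nonneg fun q _ => integral_nonneg_of_ae ?_
      by_cases hq : q = p
      · subst hq; rw [hp']; exact hnn
      · rw [hq' q hq]; exact (hfeas.1 q).2.1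
  have hVI := hvi h' Q' hfeas'
  have e1 : (∑ q, ∫ t in Icc t0 tf, Ψ0 q t * (h' q t - hstar q t))
      = ∫ t in Icc t0 tf, Ψ0 p t * δ t := by
    rw [Finset.sum_eq_single p]
    · rw [hp']; simp
    · intro q _ hq; rw [hq' q hq]; simp
    · intro habs; exact absurd (Finset.mem_univ p) habs
  have e2 : (∑ ij, Θ0 ij * (Q' ij - Qstar ij))
      = Θ0 (w p) * ∫ t in Icc t0 tf, δ t := by
    have key : ∀ ij, Θ0 ij * (Q' ij - Qstar ij)
        = if ij = w p then Θ0 (w p) * ∫ t in Icc t0 tf, δ t else 0 := by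
      intro ij
      by_cases hij : ij = w p
      · subst hij; rw [hQp, if_pos rfl]; ring
      · rw [hQq ij hij, if_neg hij]; ring
    rw [Finset.sum_congr rfl fun ij _ => key ij, Finset.sum_ite_eq' _ (w p)]
    simp
  rw [e1, e2] at hVI
  exact hVI

/-- **Sufficiency part of Theorem 3.1**: a solution of the variational inequality
`VI(Ψ, Θ)` is an E-DUE. -/
theorem vi_solution_is_edue {P W : Type*} [Fintype P] [Nonempty P] [Fintype W] [DecidableEq W]
    (t0 tf : ℝ) (ht : t0 < tf) (w : P → W)
    (Ψ : (P → ℝ → ℝ) → P → ℝ → ℝ) (Θ : (W → ℝ) → W → ℝ)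
    (hΨ : ∀ h : P → ℝ → ℝ, IsPathFlow t0 tf h → ∀ p,
      Measurable (Ψ h p) ∧ (∀ t ∈ Icc t0 tf, 0 < Ψ h p t) ∧
      MemLp (Ψ h p) 2 (volume.restrict (Icc t0 tf)))
    (hΘ : ∀ Q : W → ℝ, (∀ ij, 0 ≤ Q ij) → ∀ ij, 0 < Θ Q ij)
    (hstar : P → ℝ → ℝ) (Qstar : W → ℝ)
    (hfeas : Feasible t0 tf w hstar Qstar)
    (hvi : ∀ (h : P → ℝ → ℝ) (Q : W → ℝ), Feasible t0 tf w h Q →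
      0 ≤ (∑ p, ∫ t in Icc t0 tf, Ψ hstar p t * (h p t - hstar p t))
          - ∑ ij, Θ Qstar ij * (Q ij - Qstar ij)) :
    IsEDUE t0 tf w Ψ Θ hstar Qstar := by
  classical
  haveI : IsFiniteMeasure (volume.restrict (Icc t0 tf)) := by
    constructor
    rw [Measure.restrict_apply_univ, Real.volume_Icc]
    exact ENNReal.ofReal_lt_top
  intro p
  obtain ⟨hΨm, hΨpos, hΨ2⟩ := hΨ hstar hfeas.1 p
  obtain ⟨hm, hpnn, h2⟩ := hfeas.1 p
  have hΨint : Integrable (Ψ hstar p) (volume.restrict (Icc t0 tf)) :=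
    hΨ2.integrable one_le_two
  have hpint : Integrable (hstar p) (volume.restrict (Icc t0 tf)) :=
    h2.integrable one_le_two
  -- Part (ii): Θ ≤ Ψ a.e.
  have part2 : ∀ᵐ t ∂(volume.restrict (Icc t0 tf)), Θ Qstar (w p) ≤ Ψ hstar p t := by
    set A : Set ℝ := {t | Ψ hstar p t < Θ Qstar (w p)} with hAdef
    have hA : MeasurableSet A := measurableSet_lt hΨm measurable_const
    have key := perturb_ineq t0 tf w (Ψ hstar) (Θ Qstar) hstar Qstar hfeas hvi p
      (A.indicator fun _ => (1 : ℝ)) (measurable_const.indicator hA)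
      (MemLp.indicator hA (memLp_const 1))
      (by
        filter_upwards [hpnn] with t htn
        exact add_nonneg htn (Set.indicator_nonneg (fun _ _ => zero_le_one) t))
    have r1 : (∫ t in Icc t0 tf, Ψ hstar p t * (A.indicator (fun _ => (1:ℝ)) t))
        = ∫ t in A, Ψ hstar p t ∂(volume.restrict (Icc t0 tf)) := by
      rw [← integral_indicator hA]
      congr 1
      funext t
      by_cases htA : t ∈ A <;>
        simp [Set.indicator_of_mem, Set.indicator_of_notMem, htA]
    have r2 : (∫ t in Icc t0 tf, A.indicator (fun _ => (1:ℝ)) t)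
        = ∫ t in A, (1:ℝ) ∂(volume.restrict (Icc t0 tf)) := integral_indicator hA
    rw [r1, r2] at key
    have hnull : (volume.restrict (Icc t0 tf)) A = 0 := by
      refine null_of_setIntegral_nonpos
        (f := fun t => Θ Qstar (w p) - Ψ hstar p t) hA
        ((integrable_const _).sub hΨint) (fun t htA => sub_pos.2 htA) ?_
      rw [integral_sub (integrable_const _).integrableOn hΨint.integrableOn,
        setIntegral_const, smul_eq_mul]
      rw [setIntegral_const, smul_eq_mul, mul_one] at key
      linarith
    filter_upwards [measure_eq_zero_iff_ae_notMem.mp hnull] with t htA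
    exact not_lt.mp htA
  refine ⟨?_, part2⟩
  -- Part (i): on {hstar > 0}, Ψ ≤ Θ a.e.
  set B : Set ℝ := {t | 0 < hstar p t ∧ Θ Qstar (w p) < Ψ hstar p t} with hBdef
  have hB : MeasurableSet B := by
    have : B = {t | 0 < hstar p t} ∩ {t | Θ Qstar (w p) < Ψ hstar p t} := rfl
    rw [this]
    exact (measurableSet_lt measurable_const hm).inter
      (measurableSet_lt measurable_const hΨm)
  have key := perturb_ineq t0 tf w (Ψ hstar) (Θ Qstar) hstar Qstar hfeas hvi p
    (fun t => -(B.indicator (hstar p) t)) ((hm.indicator hB).neg)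
    ((MemLp.indicator hB h2).neg)
    (by
      filter_upwards [hpnn] with t htn
      by_cases htB : t ∈ B <;>
        simp [Set.indicator_of_mem, Set.indicator_of_notMem, htB, htn])
  have r1 : (∫ t in Icc t0 tf, Ψ hstar p t * -(B.indicator (hstar p) t))
      = -∫ t in B, Ψ hstar p t * hstar p t ∂(volume.restrict (Icc t0 tf)) := by
    rw [← integral_indicator hB, ← integral_neg]
    congr 1
    funext t
    by_cases htB : t ∈ B <;>
      simp [Set.indicator_of_mem, Set.indicator_of_notMem, htB]
  have r2 : (∫ t in Icc t0 tf, -(B.indicator (hstar p) t))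
      = -∫ t in B, hstar p t ∂(volume.restrict (Icc t0 tf)) := by
    rw [← integral_indicator hB, ← integral_neg]
  rw [r1, r2] at key
  have hnull : (volume.restrict (Icc t0 tf)) B = 0 := by
    refine null_of_setIntegral_nonpos
      (f := fun t => Ψ hstar p t * hstar p t - Θ Qstar (w p) * hstar p t) hB
      ((mul_int_aux hΨ2 h2).sub (hpint.const_mul (Θ Qstar (w p))))
      (fun t htB => sub_pos.2 (mul_lt_mul_of_pos_right htB.2 htB.1)) ?_
    rw [integral_sub (mul_int_aux hΨ2 h2).integrableOn
      (hpint.const_mul (Θ Qstar (w p))).integrableOn,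
      integral_const_mul]
    linarith
  filter_upwards [measure_eq_zero_iff_ae_notMem.mp hnull, part2] with t htB hΘΨ hpos
  have : ¬ (Θ Qstar (w p) < Ψ hstar p t) := fun hlt => htB ⟨hpos, hlt⟩
  exact le_antisymm (not_lt.mp this) hΘΨ
end

section
/- Suppose (h*, Q*) ∈ Λ̃ solves the variational inequality VI(Ψ, Θ). Then for every ij ∈ W, ∑_{p : w(p)=ij} ∫_{t0}^{tf} Ψ_p(t, h*) h*_p(t) dt = Θ_ij[Q*] · Q*_ij. (Consequence of testing the VI against the scaled flows ĥ_p = a·h*_p for p with w(p)=ij, Q̂_ij = a·Q*_ij, for all a > 0, as in the sufficiency proof of Theorem 3.1.) -/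
open MeasureTheory Set

/-- **Scaling consequence in the sufficiency proof of Theorem 3.1**: a solution of
`VI(Ψ, Θ)` satisfies, for each OD pair, equality of total experienced cost and
`Θ_ij[Q*] · Q*_ij`. -/
theorem vi_solution_cost_identity {P W : Type*} [Fintype P] [Nonempty P] [Fintype W]
    [DecidableEq W]
    (t0 tf : ℝ) (ht : t0 < tf) (w : P → W)
    (Ψ : (P → ℝ → ℝ) → P → ℝ → ℝ) (Θ : (W → ℝ) → W → ℝ)
    (hΨ : ∀ h : P → ℝ → ℝ, IsPathFlow t0 tf h → ∀ p,
      Measurable (Ψ h p) ∧ (∀ t ∈ Icc t0 tf, 0 < Ψ h p t) ∧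
      MemLp (Ψ h p) 2 (volume.restrict (Icc t0 tf)))
    (hΘ : ∀ Q : W → ℝ, (∀ ij, 0 ≤ Q ij) → ∀ ij, 0 < Θ Q ij)
    (hstar : P → ℝ → ℝ) (Qstar : W → ℝ)
    (hfeas : Feasible t0 tf w hstar Qstar)
    (hvi : ∀ (h : P → ℝ → ℝ) (Q : W → ℝ), Feasible t0 tf w h Q →
      0 ≤ (∑ p, ∫ t in Icc t0 tf, Ψ hstar p t * (h p t - hstar p t))
          - ∑ ij, Θ Qstar ij * (Q ij - Qstar ij)) :
    ∀ ij, (∑ p ∈ Finset.univ.filter (fun p => w p = ij),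
        ∫ t in Icc t0 tf, Ψ hstar p t * hstar p t) = Θ Qstar ij * Qstar ij := by
  classical
  intro ij
  set S := ∑ p ∈ Finset.univ.filter (fun p => w p = ij),
      ∫ t in Icc t0 tf, Ψ hstar p t * hstar p t with hS
  obtain ⟨hpf, hfe⟩ := hfeas
  have key : ∀ a : ℝ, 0 ≤ a →
      0 ≤ (a - 1) * (S - Θ Qstar ij * Qstar ij) := by
    intro a ha
    set h : P → ℝ → ℝ := fun p t => if w p = ij then a * hstar p t else hstar p t
      with hdef
    set Q : W → ℝ := fun ij' => if ij' = ij then a * Qstar ij' else Qstar ij'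
      with hQ
    have hfeas' : Feasible t0 tf w h Q := by
      constructor
      · intro p
        obtain ⟨hm, hnn, hl⟩ := hpf p
        by_cases hp : w p = ij
        · have he : h p = fun t => a * hstar p t := by
            funext t; simp [hdef, hp]
          rw [he]
          exact ⟨hm.const_mul a, hnn.mono fun t ht => mul_nonneg ha ht,
            hl.const_mul a⟩
        · have he : h p = hstar p := by funext t; simp [hdef, hp]
          rw [he]; exact ⟨hm, hnn, hl⟩
      · intro ij'
        by_cases hij : ij' = ij
        · subst hij
          refine ⟨by simpa [hQ] using mul_nonneg ha (hfe ij').1, ?_⟩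
          have hco : ∀ p ∈ Finset.univ.filter (fun p => w p = ij'),
              (∫ t in Icc t0 tf, h p t) = a * ∫ t in Icc t0 tf, hstar p t := by
            intro p hp
            simp only [Finset.mem_filter] at hp
            have he : h p = fun t => a * hstar p t := by funext t; simp [hdef, hp.2]
            rw [he, integral_const_mul]
          rw [Finset.sum_congr rfl hco, ← Finset.mul_sum, (hfe ij').2]
          simp [hQ]
        · refine ⟨by simpa [hQ, hij] using (hfe ij').1, ?_⟩
          have hco : ∀ p ∈ Finset.univ.filter (fun p => w p = ij'),
              (∫ t in Icc t0 tf, h p t) = ∫ t in Icc t0 tf, hstar p t := by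
            intro p hp
            simp only [Finset.mem_filter] at hp
            have hne : w p ≠ ij := by rw [hp.2]; exact hij
            have he : h p = hstar p := by funext t; simp [hdef, hne]
            rw [he]
          rw [Finset.sum_congr rfl hco, (hfe ij').2]
          simp [hQ, hij]
    have hvi' := hvi h Q hfeas'
    have hsum1 : (∑ p, ∫ t in Icc t0 tf, Ψ hstar p t * (h p t - hstar p t))
        = (a - 1) * S := by
      rw [← Finset.sum_filter_add_sum_filter_not Finset.univ (fun p => w p = ij)]
      have h1 : ∀ p ∈ Finset.univ.filter (fun p => w p = ij),
          (∫ t in Icc t0 tf, Ψ hstar p t * (h p t - hstar p t))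
          = (a - 1) * ∫ t in Icc t0 tf, Ψ hstar p t * hstar p t := by
        intro p hp
        simp only [Finset.mem_filter] at hp
        have he : (fun t => Ψ hstar p t * (h p t - hstar p t))
            = fun t => (a - 1) * (Ψ hstar p t * hstar p t) := by
          funext t
          simp only [hdef, hp.2, if_true]
          ring
        rw [he, integral_const_mul]
      have h2 : ∀ p ∈ Finset.univ.filter (fun p => ¬ w p = ij),
          (∫ t in Icc t0 tf, Ψ hstar p t * (h p t - hstar p t)) = 0 := by
        intro p hp
        simp only [Finset.mem_filter] at hp
        have he : (fun t => Ψ hstar p t * (h p t - hstar p t)) = fun _ => (0 : ℝ) := by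
          funext t; simp [hdef, hp.2]
        rw [he, integral_zero]
      rw [Finset.sum_congr rfl h1, Finset.sum_congr rfl h2, ← Finset.mul_sum]
      simp [hS]
    have hsum2 : (∑ ij', Θ Qstar ij' * (Q ij' - Qstar ij'))
        = Θ Qstar ij * ((a - 1) * Qstar ij) := by
      rw [Finset.sum_eq_single ij]
      · simp only [hQ, if_pos rfl]; ring
      · intro b _ hb; simp [hQ, hb]
      · intro hb; exact absurd (Finset.mem_univ ij) hb
    rw [hsum1, hsum2] at hvi'
    nlinarith [hvi']
  have h0 := key 0 le_rfl
  have h2 := key 2 (by norm_num)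
  nlinarith [h0, h2]
end

section
/- For a path-flow vector h define y_ij(t_f; h) = ∑_{p : w(p)=ij} ∫_{t0}^{tf} h_p(t) dt for each ij ∈ W. Then a path-flow vector h* is a dynamic user equilibrium with elastic demand with associated demands Q*_ij = y_ij(t_f; h*) if and only if for every path-flow vector h: ∑_{p∈P} ∫_{t0}^{tf} Ψ_p(t, h*)(h_p(t) − h*_p(t)) dt − ∑_{ij∈W} Θ_ij[y(t_f; h*)] (y_ij(t_f; h) − y_ij(t_f; h*)) ≥ 0. (Theorem 4.1: differential variational inequality formulation of E-DUE.) -/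
open MeasureTheory Set

/-- Terminal value of the cumulative-departure state: `y_ij(t_f; h)`. -/
noncomputable def yTf {P W : Type*} [Fintype P] [DecidableEq W] (t0 tf : ℝ) (w : P → W)
    (h : P → ℝ → ℝ) (ij : W) : ℝ :=
  ∑ p ∈ Finset.univ.filter (fun p => w p = ij), ∫ t in Icc t0 tf, h p t

lemma aux_integrable_mul {α : Type*} [MeasurableSpace α] {μ : Measure α} {f g : α → ℝ}
    (hf : MemLp f 2 μ) (hg : MemLp g 2 μ) : Integrable (fun t => f t * g t) μ := by
  have h : MemLp (f • g) 1 μ :=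
    MemLp.smul (r := 1) hg hf
  rw [memLp_one_iff_integrable] at h
  exact (by simpa [Pi.smul_apply', smul_eq_mul] using h : Integrable (f * g) μ)

/-- **Theorem 4.1 (E-DUE equivalent to a differential variational inequality)**:
`h*` is an E-DUE with associated demands `Q*_ij = y_ij(t_f; h*)` if and only if it
solves `DVI(Ψ, Θ, t0, tf)`. -/
theorem edue_iff_dvi {P W : Type*} [Fintype P] [Nonempty P] [Fintype W] [DecidableEq W]
    (t0 tf : ℝ) (ht : t0 < tf) (w : P → W)
    (Ψ : (P → ℝ → ℝ) → P → ℝ → ℝ) (Θ : (W → ℝ) → W → ℝ)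
    (hΨ : ∀ h : P → ℝ → ℝ, IsPathFlow t0 tf h → ∀ p,
      Measurable (Ψ h p) ∧ (∀ t ∈ Icc t0 tf, 0 < Ψ h p t) ∧
      MemLp (Ψ h p) 2 (volume.restrict (Icc t0 tf)))
    (hΘ : ∀ Q : W → ℝ, (∀ ij, 0 ≤ Q ij) → ∀ ij, 0 < Θ Q ij)
    (hstar : P → ℝ → ℝ) (hflow : IsPathFlow t0 tf hstar) :
    IsEDUE t0 tf w Ψ Θ hstar (yTf t0 tf w hstar) ↔
      ∀ h : P → ℝ → ℝ, IsPathFlow t0 tf h →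
        0 ≤ (∑ p, ∫ t in Icc t0 tf, Ψ hstar p t * (h p t - hstar p t))
            - ∑ ij, Θ (yTf t0 tf w hstar) ij *
                (yTf t0 tf w h ij - yTf t0 tf w hstar ij) := by
  classical
  set μ : Measure ℝ := volume.restrict (Icc t0 tf) with hμdef
  haveI : IsFiniteMeasure μ := by
    constructor
    rw [hμdef, Measure.restrict_apply_univ, Real.volume_Icc]
    exact ENNReal.ofReal_lt_top
  set Q : W → ℝ := yTf t0 tf w hstar with hQdef
  set c : P → ℝ := fun p => Θ Q (w p) with hcdef
  have hΨs := hΨ hstar hflow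
  -- basic integrability facts
  have integ : ∀ (h : P → ℝ → ℝ), IsPathFlow t0 tf h → ∀ p, Integrable (h p) μ :=
    fun h hh p => ((hh p).2.2).integrable one_le_two
  have integd : ∀ (h : P → ℝ → ℝ), IsPathFlow t0 tf h → ∀ p,
      Integrable (fun t => (Ψ hstar p t - c p) * (h p t - hstar p t)) μ := by
    intro h hh p
    exact aux_integrable_mul ((hΨs p).2.2.sub (memLp_const (c p)))
      (((hh p).2.2).sub ((hflow p).2.2))
  -- the key algebraic identity
  have key : ∀ h : P → ℝ → ℝ, IsPathFlow t0 tf h →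
      (∑ p, ∫ t, Ψ hstar p t * (h p t - hstar p t) ∂μ)
        - ∑ ij, Θ Q ij * (yTf t0 tf w h ij - yTf t0 tf w hstar ij)
      = ∑ p, ∫ t, (Ψ hstar p t - c p) * (h p t - hstar p t) ∂μ := by
    intro h hh
    have h1 : ∑ ij, Θ Q ij * (yTf t0 tf w h ij - yTf t0 tf w hstar ij)
        = ∑ p, c p * ((∫ t, h p t ∂μ) - ∫ t, hstar p t ∂μ) := by
      rw [← Finset.sum_fiberwise Finset.univ w
        (fun p => c p * ((∫ t, h p t ∂μ) - ∫ t, hstar p t ∂μ))]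
      refine Finset.sum_congr rfl fun ij _ => ?_
      unfold yTf
      rw [← Finset.sum_sub_distrib, Finset.mul_sum]
      refine Finset.sum_congr rfl fun p hp => ?_
      simp only [Finset.mem_filter] at hp
      rw [hcdef]
      simp [hp.2, hμdef]
    rw [h1, ← Finset.sum_sub_distrib]
    refine Finset.sum_congr rfl fun p _ => ?_
    have hd : Integrable (fun t => h p t - hstar p t) μ :=
      (integ h hh p).sub (integ hstar hflow p)
    have hm : Integrable (fun t => Ψ hstar p t * (h p t - hstar p t)) μ :=
      aux_integrable_mul ((hΨs p).2.2) (((hh p).2.2).sub ((hflow p).2.2))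
    have e1 : ∫ t, (Ψ hstar p t - c p) * (h p t - hstar p t) ∂μ
        = ∫ t, (Ψ hstar p t * (h p t - hstar p t) - c p * (h p t - hstar p t)) ∂μ := by
      congr 1; funext t; ring
    rw [e1, integral_sub hm (hd.const_mul (c p)), integral_const_mul,
      integral_sub (integ h hh p) (integ hstar hflow p)]
  -- pathflows obtained by updating one coordinate
  have updFlow : ∀ (p : P) (g : ℝ → ℝ), Measurable g →
      (∀ᵐ t ∂μ, 0 ≤ g t) → MemLp g 2 μ →
      IsPathFlow t0 tf (Function.update hstar p g) := by
    intro p g hg1 hg2 hg3 q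
    by_cases hq : q = p
    · subst hq
      simp only [Function.update_self]
      exact ⟨hg1, hg2, hg3⟩
    · rw [Function.update_of_ne hq]
      exact hflow q
  have sum_update : ∀ (p : P) (g : ℝ → ℝ),
      (∑ q, ∫ t, (Ψ hstar q t - c q) * (Function.update hstar p g q t - hstar q t) ∂μ)
      = ∫ t, (Ψ hstar p t - c p) * (g t - hstar p t) ∂μ := by
    intro p g
    rw [Finset.sum_eq_single_of_mem p (Finset.mem_univ p)]
    · simp [Function.update_self]
    · intro q _ hq
      rw [Function.update_of_ne hq]
      simp
  constructor
  · -- E-DUE → DVI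
    intro hED h hh
    have := key h hh
    rw [hμdef] at this
    rw [this]
    apply Finset.sum_nonneg
    intro p _
    apply integral_nonneg_of_ae
    filter_upwards [(hED p).1, (hED p).2, (hh p).2.1, (hflow p).2.1] with t h1 h2 h3 h4
    rcases eq_or_lt_of_le h4 with heq | hpos
    · have hnn : (0:ℝ) ≤ Ψ hstar p t - c p := sub_nonneg.2 h2
      rw [← heq]
      simpa using mul_nonneg hnn (by linarith)
    · rw [h1 hpos]
      simp [hcdef]
  · -- DVI → E-DUE
    intro hDVI
    have hDVI' : ∀ h : P → ℝ → ℝ, IsPathFlow t0 tf h →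
        0 ≤ ∑ q, ∫ t, (Ψ hstar q t - c q) * (h q t - hstar q t) ∂μ := by
      intro h hh
      have h0 := hDVI h hh
      have hk := key h hh
      rw [hμdef] at hk
      rwa [hk] at h0
    intro p
    -- part (ii): a.e. Θ ≤ Ψ
    have hint : Integrable (fun t => Ψ hstar p t - c p) μ :=
      (((hΨs p).2.2).integrable one_le_two).sub (integrable_const _)
    have h2 : ∀ᵐ t ∂μ, c p ≤ Ψ hstar p t := by
      have hae : 0 ≤ᵐ[μ] fun t => Ψ hstar p t - c p := by
        apply ae_nonneg_of_forall_setIntegral_nonneg hint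
        intro s hs _
        set g : ℝ → ℝ := fun t => hstar p t + s.indicator (fun _ => 1) t with hgdef
        have hh : IsPathFlow t0 tf (Function.update hstar p g) := by
          apply updFlow p g
          · exact (hflow p).1.add (measurable_const.indicator hs)
          · filter_upwards [(hflow p).2.1] with t h0
            exact add_nonneg h0 (Set.indicator_nonneg (fun _ _ => zero_le_one) t)
          · exact ((hflow p).2.2).add ((memLp_const 1).indicator hs)
        have h0 := hDVI' _ hh
        rw [sum_update p g] at h0
        have e : ∫ t, (Ψ hstar p t - c p) * (g t - hstar p t) ∂μ
            = ∫ x in s, (Ψ hstar p x - c p) ∂μ := by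
          rw [← integral_indicator hs]
          congr 1; funext t
          by_cases hts : t ∈ s <;>
            simp [hgdef, Set.indicator_of_mem, Set.indicator_of_notMem, hts]
        rwa [e] at h0
      filter_upwards [hae] with t h0
      have : (0:ℝ) ≤ Ψ hstar p t - c p := h0
      linarith
    refine ⟨?_, h2⟩
    -- part (i)
    set f : ℝ → ℝ := fun t => (Ψ hstar p t - c p) * hstar p t with hfdef
    have hfi : Integrable f μ :=
      aux_integrable_mul ((hΨs p).2.2.sub (memLp_const (c p))) ((hflow p).2.2)
    have hf_nonneg : 0 ≤ᵐ[μ] f := by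
      filter_upwards [h2, (hflow p).2.1] with t ha hb
      exact mul_nonneg (by linarith) hb
    have hf_le : ∫ t, f t ∂μ ≤ 0 := by
      have hh : IsPathFlow t0 tf (Function.update hstar p (fun _ => 0)) := by
        apply updFlow p _ measurable_const
        · filter_upwards with t; exact le_refl 0
        · exact memLp_const 0
      have h0 := hDVI' _ hh
      rw [sum_update p _] at h0
      have e : ∫ t, (Ψ hstar p t - c p) * ((fun _ => (0:ℝ)) t - hstar p t) ∂μ
          = - ∫ t, f t ∂μ := by
        rw [← integral_neg]
        congr 1; funext t
        simp only [hfdef]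
        ring
      rw [e] at h0
      linarith
    have hzero : ∫ t, f t ∂μ = 0 :=
      le_antisymm hf_le (integral_nonneg_of_ae hf_nonneg)
    have hz : f =ᵐ[μ] 0 := (integral_eq_zero_iff_of_nonneg_ae hf_nonneg hfi).1 hzero
    filter_upwards [hz] with t htz hpos
    rcases mul_eq_zero.1 htz with h' | h'
    · have := sub_eq_zero.1 h'
      simpa [hcdef] using this
    · exfalso; rw [h'] at hpos; exact lt_irrefl 0 hpos
end

section
/- Let δ > 0 and let I' = [a − δ, a] and I = [a, a + δ] be adjacent intervals. Let Ψ be a continuous real-valued function on I' ∪ I, let t* ∈ I' satisfy Ψ(t*) ≥ Ψ(s) for all s ∈ I', and let c > 3 be such that Ψ(t) − Ψ(t*) ≥ c (t − a) − (t − t*) for all t ∈ I. Then ∫_I Ψ(t) dt ≥ δ Ψ(t*) + (δ²/2)(c − 3) > δ Ψ(t*) ≥ ∫_{I'} Ψ(t) dt; in particular ∫_I Ψ(t) dt > ∫_{I'} Ψ(t) dt. (Integral comparison step (34) in the proof of Lemma A.2.) -/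
open MeasureTheory Set

open intervalIntegral in
private lemma aux_integral_id (a b : ℝ) : ∫ x in a..b, x = (b ^ 2 - a ^ 2) / 2 :=
  integral_id

/-- **Integral comparison step (34) in the proof of Lemma A.2**: on adjacent
intervals `I' = [a − δ, a]` and `I = [a, a + δ]`, if `t* ∈ I'` maximizes the
continuous function `Ψ` over `I'` and `Ψ(t) − Ψ(t*) ≥ c(t − a) − (t − t*)` on `I`
with `c > 3`, then
`∫_I Ψ ≥ δ Ψ(t*) + (δ²/2)(c − 3) > δ Ψ(t*) ≥ ∫_{I'} Ψ`; in particular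
`∫_I Ψ > ∫_{I'} Ψ`. -/
theorem adjacent_interval_integral_comparison
    (a δ : ℝ) (hδ : 0 < δ)
    (Ψ : ℝ → ℝ) (hcont : ContinuousOn Ψ (Icc (a - δ) (a + δ)))
    (tstar : ℝ) (hts : tstar ∈ Icc (a - δ) a)
    (hmax : ∀ s ∈ Icc (a - δ) a, Ψ s ≤ Ψ tstar)
    (c : ℝ) (hc : 3 < c)
    (hlow : ∀ t ∈ Icc a (a + δ), c * (t - a) - (t - tstar) ≤ Ψ t - Ψ tstar) :
    (δ * Ψ tstar + δ ^ 2 / 2 * (c - 3) ≤ ∫ t in Icc a (a + δ), Ψ t) ∧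
    (δ * Ψ tstar < δ * Ψ tstar + δ ^ 2 / 2 * (c - 3)) ∧
    ((∫ t in Icc (a - δ) a, Ψ t) ≤ δ * Ψ tstar) ∧
    ((∫ t in Icc (a - δ) a, Ψ t) < ∫ t in Icc a (a + δ), Ψ t) := by
  have hsub1 : Icc a (a + δ) ⊆ Icc (a - δ) (a + δ) :=
    Icc_subset_Icc (by linarith) le_rfl
  have hsub2 : Icc (a - δ) a ⊆ Icc (a - δ) (a + δ) :=
    Icc_subset_Icc le_rfl (by linarith)
  have hΨ1 : IntegrableOn Ψ (Icc a (a + δ)) :=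
    (hcont.mono hsub1).integrableOn_Icc
  have hΨ2 : IntegrableOn Ψ (Icc (a - δ) a) :=
    (hcont.mono hsub2).integrableOn_Icc
  -- lower bound function
  have hg : IntegrableOn (fun t => Ψ tstar + (c - 1) * (t - a) - δ) (Icc a (a + δ)) :=
    (Continuous.continuousOn (by continuity)).integrableOn_Icc
  have hpt : ∀ t ∈ Icc a (a + δ), Ψ tstar + (c - 1) * (t - a) - δ ≤ Ψ t := by
    intro t ht
    have h1 := hlow t ht
    have h2 : a - δ ≤ tstar := hts.1
    nlinarith
  have hint1 : (∫ t in Icc a (a + δ), (Ψ tstar + (c - 1) * (t - a) - δ)) ≤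
      ∫ t in Icc a (a + δ), Ψ t :=
    setIntegral_mono_on hg hΨ1 measurableSet_Icc hpt
  have hval : (∫ t in Icc a (a + δ), (Ψ tstar + (c - 1) * (t - a) - δ)) =
      δ * Ψ tstar + δ ^ 2 / 2 * (c - 3) := by
    rw [integral_Icc_eq_integral_Ioc, ← intervalIntegral.integral_of_le (by linarith : a ≤ a + δ)]
    have : ∀ t : ℝ, Ψ tstar + (c - 1) * (t - a) - δ = (c - 1) * t + (Ψ tstar - (c-1)*a - δ) := by
      intro t; ring
    simp_rw [this]
    rw [intervalIntegral.integral_add (by apply Continuous.intervalIntegrable; continuity)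
      (intervalIntegrable_const), intervalIntegral.integral_const_mul,
      aux_integral_id a (a + δ), intervalIntegral.integral_const, smul_eq_mul]
    ring
  have h1 : δ * Ψ tstar + δ ^ 2 / 2 * (c - 3) ≤ ∫ t in Icc a (a + δ), Ψ t := by
    rw [← hval]; exact hint1
  have h2 : δ * Ψ tstar < δ * Ψ tstar + δ ^ 2 / 2 * (c - 3) := by nlinarith [sq_nonneg δ, mul_pos (mul_pos hδ hδ) (by linarith : (0:ℝ) < c - 3)]
  have h3 : (∫ t in Icc (a - δ) a, Ψ t) ≤ δ * Ψ tstar := by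
    have hm := setIntegral_mono_on hΨ2 (integrableOn_const (by simp))
      measurableSet_Icc hmax
    have hvol : (∫ _ in Icc (a - δ) a, Ψ tstar) = δ * Ψ tstar := by
      rw [setIntegral_const, Real.volume_real_Icc_of_le (by linarith : a - δ ≤ a), smul_eq_mul]
      ring
    linarith [hm, hvol.ge, hvol.le]
  exact ⟨h1, h2, h3, by linarith⟩
end

section
/- Fix n ≥ 1 and suppose (h*, Q*) ∈ Λ̃ⁿ satisfies the restricted variational inequality: ∑_{p∈P} ∫_{t0}^{tf} Ψ_p(t, h*)(h_p(t) − h*_p(t)) dt − ∑_{ij∈W} Θ_ij[Q*](Q_ij − Q*_ij) ≥ 0 for all (h, Q) ∈ Λ̃ⁿ. Then for every p ∈ P and every k ∈ {1, …, n}: if h*_p > 0 on Iᵏ, then ∫_{Iᵏ} Ψ_p(t, h*) dt = min_{1≤j≤n} ∫_{Iʲ} Ψ_p(t, h*) dt. (Min-interval property (31) in the proof of Theorem 5.2.) -/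
open MeasureTheory Set

/-- `g` is a.e. equal to a constant on each interval `Iʲ`, `j = 1, …, n`, of the
uniform partition of `[t0, tf]` into `n` subintervals. -/
def PiecewiseConstOn (t0 tf : ℝ) (n : ℕ) (g : ℝ → ℝ) : Prop :=
  ∀ j ∈ Finset.Icc 1 n, ∃ c : ℝ,
    ∀ᵐ t ∂(volume.restrict (Icc (t0 + ((j : ℝ) - 1) * ((tf - t0) / n))
        (t0 + (j : ℝ) * ((tf - t0) / n)))), g t = c

/-- Membership in the finite-dimensional approximation `Λ̃ⁿ` of the feasible set. -/
def InLamN {P W : Type*} [Fintype P] [DecidableEq W] (t0 tf : ℝ) (w : P → W) (U : W → ℝ)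
    (n : ℕ) (h : P → ℝ → ℝ) (Q : W → ℝ) : Prop :=
  Feasible t0 tf w h Q ∧ (∀ ij, Q ij ≤ U ij) ∧ ∀ p, PiecewiseConstOn t0 tf n (h p)

/-- The `j`-th interval of the uniform partition of `[t0, tf]` into `n` subintervals. -/
noncomputable def unifI (t0 tf : ℝ) (n j : ℕ) : Set ℝ :=
  Icc (t0 + ((j : ℝ) - 1) * ((tf - t0) / n)) (t0 + (j : ℝ) * ((tf - t0) / n))

/-- **Min-interval property (31) in the proof of Theorem 5.2**: a solution of the
restricted variational inequality over `Λ̃ⁿ` routes flow on an interval `Iᵏ` only if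
`∫_{Iᵏ} Ψ_p` achieves the minimum of `∫_{Iʲ} Ψ_p` over `j = 1, …, n`. -/
theorem restricted_vi_min_interval {P W : Type*} [Fintype P] [Nonempty P] [Fintype W]
    [DecidableEq W]
    (t0 tf : ℝ) (ht : t0 < tf) (w : P → W)
    (U : W → ℝ) (hU : ∀ ij, 0 < U ij)
    (Ψ : (P → ℝ → ℝ) → P → ℝ → ℝ) (Θ : (W → ℝ) → W → ℝ)
    (hΨreg : ∀ h : P → ℝ → ℝ, IsPathFlow t0 tf h → ∀ p,
      Measurable (Ψ h p) ∧ (∀ t ∈ Icc t0 tf, 0 < Ψ h p t) ∧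
      MemLp (Ψ h p) 2 (volume.restrict (Icc t0 tf)))
    (hΘpos : ∀ Q : W → ℝ, (∀ ij, 0 ≤ Q ij) → ∀ ij, 0 < Θ Q ij)
    (n : ℕ) (hn : 1 ≤ n)
    (hstar : P → ℝ → ℝ) (Qstar : W → ℝ)
    (hmem : InLamN t0 tf w U n hstar Qstar)
    (hvi : ∀ (h : P → ℝ → ℝ) (Q : W → ℝ), InLamN t0 tf w U n h Q →
      0 ≤ (∑ p, ∫ t in Icc t0 tf, Ψ hstar p t * (h p t - hstar p t))
          - ∑ ij, Θ Qstar ij * (Q ij - Qstar ij)) :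
    ∀ p, ∀ k ∈ Finset.Icc 1 n,
      (∀ᵐ t ∂(volume.restrict (unifI t0 tf n k)), 0 < hstar p t) →
      ∀ j ∈ Finset.Icc 1 n,
        (∫ t in unifI t0 tf n k, Ψ hstar p t) ≤ ∫ t in unifI t0 tf n j, Ψ hstar p t := by
  
  classical
  intro p k hk hkpos j hj
  by_cases hjk : j = k
  · subst hjk; exact le_rfl
  have hnR : (0:ℝ) < (n:ℝ) := by exact_mod_cast hn
  set δ : ℝ := (tf - t0) / n with hδdef
  have hδ : 0 < δ := div_pos (by linarith) hnR
  have hnδ : (n:ℝ) * δ = tf - t0 := by rw [hδdef]; field_simp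
  have hmeasI : ∀ m : ℕ, MeasurableSet (unifI t0 tf n m) := fun m => measurableSet_Icc
  have hsub : ∀ m ∈ Finset.Icc 1 n, unifI t0 tf n m ⊆ Icc t0 tf := by
    intro m hm
    rw [Finset.mem_Icc] at hm
    have h1 : (1:ℝ) ≤ (m:ℝ) := by exact_mod_cast hm.1
    have h2 : (m:ℝ) ≤ (n:ℝ) := by exact_mod_cast hm.2
    have h3 : (m:ℝ) * δ ≤ (n:ℝ) * δ := mul_le_mul_of_nonneg_right h2 hδ.le
    apply Icc_subset_Icc
    · nlinarith
    · linarith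
  have hvol : ∀ m : ℕ, volume (unifI t0 tf n m) = ENNReal.ofReal δ := by
    intro m
    rw [show unifI t0 tf n m = Icc (t0 + ((m : ℝ) - 1) * δ) (t0 + (m : ℝ) * δ) from rfl,
      Real.volume_Icc]
    congr 1; ring
  have hdisj0 : ∀ m l : ℕ, m < l → volume (unifI t0 tf n m ∩ unifI t0 tf n l) = 0 := by
    intro m l hml
    rw [show unifI t0 tf n m ∩ unifI t0 tf n l =
        Icc (t0 + ((m : ℝ) - 1) * δ) (t0 + (m : ℝ) * δ) ∩
        Icc (t0 + ((l : ℝ) - 1) * δ) (t0 + (l : ℝ) * δ) from rfl,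
      Icc_inter_Icc, Real.volume_Icc]
    rw [ENNReal.ofReal_eq_zero]
    have h1 : (m:ℝ) + 1 ≤ (l:ℝ) := by exact_mod_cast hml
    have h2 : (m:ℝ) * δ ≤ ((l:ℝ) - 1) * δ := mul_le_mul_of_nonneg_right (by linarith) hδ.le
    have h3 : (t0 + (m:ℝ) * δ) ⊓ (t0 + (l:ℝ) * δ) ≤ t0 + (m:ℝ) * δ := min_le_left _ _
    have h4 : t0 + ((l:ℝ) - 1) * δ ≤ (t0 + ((m:ℝ) - 1) * δ) ⊔ (t0 + ((l:ℝ) - 1) * δ) :=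
      le_max_right _ _
    linarith
  have hdisj : ∀ m l : ℕ, m ≠ l → volume (unifI t0 tf n m ∩ unifI t0 tf n l) = 0 := by
    intro m l hml
    rcases lt_or_gt_of_ne hml with h | h
    · exact hdisj0 m l h
    · rw [inter_comm]; exact hdisj0 l m h
  haveI : IsFiniteMeasure (volume.restrict (Icc t0 tf)) := by
    constructor
    rw [Measure.restrict_apply_univ, Real.volume_Icc]
    exact ENNReal.ofReal_lt_top
  obtain ⟨⟨hPF, hQeq⟩, hQU, hPC⟩ := hmem
  obtain ⟨hΨm, hΨpos, hΨL2⟩ := hΨreg hstar hPF p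
  have hΨint : Integrable (Ψ hstar p) (volume.restrict (Icc t0 tf)) :=
    hΨL2.integrable one_le_two
  -- the constant value c of h* p on I^k, and c > 0
  obtain ⟨c, hc⟩ := hPC p k hk
  have hc' : ∀ᵐ t ∂(volume.restrict (unifI t0 tf n k)), hstar p t = c := hc
  have hcpos : 0 < c := by
    have hne : volume.restrict (unifI t0 tf n k) ≠ 0 := by
      rw [Ne, Measure.restrict_eq_zero, hvol k]
      simp [ENNReal.ofReal_eq_zero, not_le, hδ]
    haveI : (ae (volume.restrict (unifI t0 tf n k))).NeBot := ae_neBot.mpr hne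
    obtain ⟨t, h1, h2⟩ := (hc'.and hkpos).exists
    rw [← h1]; exact h2
  -- the perturbation
  set g : ℝ → ℝ := fun t =>
    c * ((unifI t0 tf n j).indicator (fun _ => (1:ℝ)) t
       - (unifI t0 tf n k).indicator (fun _ => (1:ℝ)) t) with hg
  set h' : P → ℝ → ℝ := fun q => if q = p then (fun t => hstar p t + g t) else hstar q with hh'
  have hgmeas : Measurable g := by
    apply Measurable.const_mul
    exact ((measurable_const.indicator (hmeasI j)).sub
      (measurable_const.indicator (hmeasI k)))
  have hgL2 : MemLp g 2 (volume.restrict (Icc t0 tf)) := by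
    apply MemLp.const_mul
    exact ((memLp_const (1:ℝ)).indicator (hmeasI j)).sub
      ((memLp_const (1:ℝ)).indicator (hmeasI k))
  -- a.e. on Icc t0 tf : t ∈ I^k → hstar p t = c
  have hcae : ∀ᵐ t ∂(volume.restrict (Icc t0 tf)), t ∈ unifI t0 tf n k → hstar p t = c :=
    ae_restrict_of_ae ((ae_restrict_iff' (hmeasI k)).mp hc')
  -- h' is a path flow
  have hPF' : IsPathFlow t0 tf h' := by
    intro q
    by_cases hq : q = p
    · subst hq
      have hfq : h' q = fun t => hstar q t + g t := by simp only [hh', if_pos rfl]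
      rw [hfq]
      refine ⟨(hPF q).1.add hgmeas, ?_, (hPF q).2.2.add hgL2⟩
      · filter_upwards [(hPF q).2.1, hcae] with t ht0 htk
        by_cases hik : t ∈ unifI t0 tf n k
        · have hval : hstar q t = c := htk hik
          by_cases hij : t ∈ unifI t0 tf n j
          · simp only [hg, indicator_of_mem hik, indicator_of_mem hij, hval]
            nlinarith [hcpos]
          · simp only [hg, indicator_of_mem hik, indicator_of_notMem hij, hval]
            nlinarith [hcpos]
        · by_cases hij : t ∈ unifI t0 tf n j
          · simp only [hg, indicator_of_notMem hik, indicator_of_mem hij]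
            nlinarith [hcpos, ht0]
          · simp only [hg, indicator_of_notMem hik, indicator_of_notMem hij]
            nlinarith [hcpos, ht0]
    · simpa only [hh', if_neg hq] using hPF q
  -- integral of indicator over Icc t0 tf
  have hindint : ∀ m ∈ Finset.Icc 1 n,
      (∫ t in Icc t0 tf, (unifI t0 tf n m).indicator (fun _ => (1:ℝ)) t) = δ := by
    intro m hm
    rw [integral_indicator (hmeasI m), Measure.restrict_restrict (hmeasI m),
      inter_eq_self_of_subset_left (hsub m hm), setIntegral_const, measureReal_def, hvol m,
      ENNReal.toReal_ofReal hδ.le, smul_eq_mul, mul_one]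
  have hindInt : ∀ m : ℕ, Integrable ((unifI t0 tf n m).indicator (fun _ => (1:ℝ)))
      (volume.restrict (Icc t0 tf)) :=
    fun m => ((memLp_const (1:ℝ)).indicator (hmeasI m)).integrable one_le_two
  have hgint : (∫ t in Icc t0 tf, g t) = 0 := by
    simp only [hg]
    rw [integral_const_mul, integral_sub (hindInt j) (hindInt k), hindint j hj, hindint k hk]
    ring
  -- integral of h' equals integral of hstar
  have hinteq : ∀ q, (∫ t in Icc t0 tf, h' q t) = ∫ t in Icc t0 tf, hstar q t := by
    intro q
    by_cases hq : q = p
    · subst hq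
      simp only [hh', if_pos rfl]
      rw [integral_add ((hPF q).2.2.integrable one_le_two)
        (hgL2.integrable one_le_two), hgint, add_zero]
    · simp only [hh', if_neg hq]
  -- h' is piecewise constant
  have hPC' : ∀ q, PiecewiseConstOn t0 tf n (h' q) := by
    intro q
    by_cases hq : q = p
    · subst hq
      intro m hm
      obtain ⟨cm, hcm⟩ := hPC q m hm
      refine ⟨cm + c * ((if m = j then 1 else 0) - (if m = k then 1 else 0)), ?_⟩
      have hmemae : ∀ l : ℕ, ∀ᵐ t ∂(volume.restrict (unifI t0 tf n m)),
          (unifI t0 tf n l).indicator (fun _ => (1:ℝ)) t = if m = l then 1 else 0 := by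
        intro l
        by_cases hml : m = l
        · subst hml
          filter_upwards [ae_restrict_mem (hmeasI m)] with t htm
          simp [indicator_of_mem htm]
        · have hz : (volume.restrict (unifI t0 tf n m)) (unifI t0 tf n l) = 0 := by
            rw [Measure.restrict_apply (hmeasI l), inter_comm]
            exact hdisj m l hml
          filter_upwards [measure_eq_zero_iff_ae_notMem.mp hz] with t htl
          simp [indicator_of_notMem htl, hml]
      have hcm' : ∀ᵐ t ∂(volume.restrict (unifI t0 tf n m)), hstar q t = cm := hcm
      filter_upwards [hcm', hmemae j, hmemae k] with t h1 h2 h3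
      simp only [hh', if_pos rfl, hg, h1, h2, h3]
    · simp only [hh', if_neg hq]; exact hPC q
  -- (h', Qstar) ∈ Λ̃ⁿ
  have hmem' : InLamN t0 tf w U n h' Qstar := by
    refine ⟨⟨hPF', fun ij => ⟨(hQeq ij).1, ?_⟩⟩, hQU, hPC'⟩
    rw [← (hQeq ij).2]
    exact Finset.sum_congr rfl fun q _ => hinteq q
  -- apply the VI
  have key := hvi h' Qstar hmem'
  have hΘzero : (∑ ij, Θ Qstar ij * (Qstar ij - Qstar ij)) = 0 := by simp
  rw [hΘzero, sub_zero] at key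
  -- compute the sum
  have hsum : (∑ q, ∫ t in Icc t0 tf, Ψ hstar q t * (h' q t - hstar q t))
      = c * ((∫ t in unifI t0 tf n j, Ψ hstar p t) - ∫ t in unifI t0 tf n k, Ψ hstar p t) := by
    rw [Finset.sum_eq_single_of_mem p (Finset.mem_univ p)]
    · have hpt : ∀ t, Ψ hstar p t * (h' p t - hstar p t)
          = c * ((unifI t0 tf n j).indicator (Ψ hstar p) t
               - (unifI t0 tf n k).indicator (Ψ hstar p) t) := by
        intro t
        simp only [hh', if_pos rfl, hg]
        by_cases hij : t ∈ unifI t0 tf n j <;> by_cases hik : t ∈ unifI t0 tf n k <;>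
          simp [indicator_of_mem, indicator_of_notMem, hij, hik] <;> ring
      calc (∫ t in Icc t0 tf, Ψ hstar p t * (h' p t - hstar p t))
          = ∫ t in Icc t0 tf, c * ((unifI t0 tf n j).indicator (Ψ hstar p) t
               - (unifI t0 tf n k).indicator (Ψ hstar p) t) := by
            exact integral_congr_ae (Filter.Eventually.of_forall hpt)
        _ = c * ((∫ t in Icc t0 tf, (unifI t0 tf n j).indicator (Ψ hstar p) t)
               - ∫ t in Icc t0 tf, (unifI t0 tf n k).indicator (Ψ hstar p) t) := by
            rw [integral_const_mul, integral_sub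
              ((hΨL2.indicator (hmeasI j)).integrable one_le_two)
              ((hΨL2.indicator (hmeasI k)).integrable one_le_two)]
        _ = c * ((∫ t in unifI t0 tf n j, Ψ hstar p t)
               - ∫ t in unifI t0 tf n k, Ψ hstar p t) := by
            rw [integral_indicator (hmeasI j), integral_indicator (hmeasI k),
              Measure.restrict_restrict (hmeasI j), Measure.restrict_restrict (hmeasI k),
              inter_eq_self_of_subset_left (hsub j hj),
              inter_eq_self_of_subset_left (hsub k hk)]
    · intro q _ hq
      have : ∀ t, Ψ hstar q t * (h' q t - hstar q t) = 0 := by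
        intro t; simp [hh', if_neg hq]
      simp [this]
  rw [hsum] at key
  have := (mul_nonneg_iff_of_pos_left hcpos).mp key
  linarith
end
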